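/- Let φ be a continuous RDS on a Polish space E over an MDS (Ω,𝓕,P,(ϑ_t)). If there exists a compact random set K which weakly attracts every bounded subset of E, then for every ε>0 there exists a compact subset C_ε of E such that for each δ>0 and each bounded subset B of E there is a t_0>0 with P{φ(t,ω)(B) ⊆ C_ε^δ} ≥ 1−ε for all t ≥ t_0. -/

import Mathlib

open MeasureTheory Set Filter Topology Metric

noncomputable section

/-- Hausdorff semi-distance `d(B, A) = sup_{b ∈ B} inf_{a ∈ A} d(b, a)`, valued in `ℝ≥0∞`. -/
def semiDist {E : Type*} [PseudoEMetricSpace E] (B A : Set E) : ENNReal :=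
  ⨆ b ∈ B, EMetric.infEdist b A

/-- A metric dynamical system (MDS) over the probability space `(Ω, 𝓕, P)`. -/
structure MetricDS (Ω : Type*) [MeasurableSpace Ω] (P : Measure Ω) where
  θ : ℝ → Ω → Ω
  measurable_theta : Measurable fun p : ℝ × Ω => θ p.1 p.2
  theta_add : ∀ s t : ℝ, θ (s + t) = θ s ∘ θ t
  theta_zero : θ 0 = id
  measurePreserving_theta : ∀ t : ℝ, MeasurePreserving (θ t) P P

/-- A continuous random dynamical system (RDS) `φ` on `E` over an MDS, with time `[0,∞)`
(the map is defined for all real times, but only its restriction to `t ≥ 0` is constrained). -/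
structure ContinuousRDS (E Ω : Type*) [MetricSpace E] [MeasurableSpace E]
    [MeasurableSpace Ω] (P : Measure Ω) extends MetricDS Ω P where
  φ : ℝ → E → Ω → E
  measurable_phi : Measurable fun p : ℝ × E × Ω => φ p.1 p.2.1 p.2.2
  cocycle : ∀ s t : ℝ, 0 ≤ s → 0 ≤ t → ∀ x ω, φ (t + s) x ω = φ t (φ s x ω) (θ s ω)
  phi_zero : ∀ x ω, φ 0 x ω = x
  continuous_phi : ∀ t : ℝ, 0 ≤ t → ∀ ω, Continuous fun x => φ t x ω

variable {E Ω : Type*} [MetricSpace E] [MeasurableSpace E] [MeasurableSpace Ω] {P : Measure Ω}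

/-- A compact random set: values are nonempty compact subsets of `E`, and
`ω ↦ d(x, K ω)` is measurable for every `x`. -/
def IsCompactRandomSet (K : Ω → Set E) : Prop :=
  (∀ ω, IsCompact (K ω)) ∧ (∀ ω, (K ω).Nonempty) ∧
    ∀ x : E, Measurable fun ω => infDist x (K ω)

/-- Strict `φ`-invariance: for each `t ≥ 0`, a.s. `φ(t,ω)(A(ω)) = A(ϑ_t ω)`. -/
def StrictlyInvariant (ψ : ContinuousRDS E Ω P) (A : Ω → Set E) : Prop :=
  ∀ t : ℝ, 0 ≤ t → ∀ᵐ ω ∂P, (fun x => ψ.φ t x ω) '' A ω = A (ψ.θ t ω)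

/-- `K` attracts `B` strongly: `d(φ(t, ϑ_{-t} ω)(B), K(ω)) → 0` almost surely. -/
def StronglyAttracts (ψ : ContinuousRDS E Ω P) (K : Ω → Set E) (B : Set E) : Prop :=
  ∀ᵐ ω ∂P, Tendsto (fun t : ℝ =>
    semiDist ((fun x => ψ.φ t x (ψ.θ (-t) ω)) '' B) (K ω)) atTop (𝓝 0)

/-- `K` attracts `B` weakly: `d(φ(t, ϑ_{-t} ω)(B), K(ω)) → 0` in probability. -/
def WeaklyAttracts (ψ : ContinuousRDS E Ω P) (K : Ω → Set E) (B : Set E) : Prop :=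
  ∀ ε : ENNReal, 0 < ε → Tendsto (fun t : ℝ =>
    P {ω | ε < semiDist ((fun x => ψ.φ t x (ψ.θ (-t) ω)) '' B) (K ω)}) atTop (𝓝 0)

/-- Forward version of weak attraction: `sup_{x ∈ B} d(φ(t,ω)(x), A(ϑ_t ω)) → 0` in probability. -/
def WeaklyAttractsForward (ψ : ContinuousRDS E Ω P) (A : Ω → Set E) (B : Set E) : Prop :=
  ∀ ε : ENNReal, 0 < ε → Tendsto (fun t : ℝ =>
    P {ω | ε < semiDist ((fun x => ψ.φ t x ω) '' B) (A (ψ.θ t ω))}) atTop (𝓝 0)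

/-- A strong `𝓑`-attractor. -/
def IsStrongAttractor (ψ : ContinuousRDS E Ω P) (𝓑 : Set (Set E)) (A : Ω → Set E) : Prop :=
  IsCompactRandomSet A ∧ StrictlyInvariant ψ A ∧ ∀ B ∈ 𝓑, StronglyAttracts ψ A B

/-- A weak `𝓑`-attractor. -/
def IsWeakAttractor (ψ : ContinuousRDS E Ω P) (𝓑 : Set (Set E)) (A : Ω → Set E) : Prop :=
  IsCompactRandomSet A ∧ StrictlyInvariant ψ A ∧ ∀ B ∈ 𝓑, WeaklyAttractsForward ψ A B

/-- The `Ω`-limit set of a set `B ⊆ E`: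
`Ω_B(ω) = ⋂_{T ≥ 0} closure (⋃_{t ≥ T} φ(t, ϑ_{-t} ω)(B))`. -/
def omegaLimitSet (ψ : ContinuousRDS E Ω P) (B : Set E) (ω : Ω) : Set E :=
  ⋂ T ∈ Ici (0:ℝ), closure (⋃ t ∈ Ici T, (fun x => ψ.φ t x (ψ.θ (-t) ω)) '' B)

lemma measurableSet_subset_closed {K : Ω → Set E} (hK : IsCompactRandomSet K)
    (u : ℕ → E) (hu : DenseRange u) {F : Set E} (hF : IsClosed F) :
    MeasurableSet {ω | K ω ⊆ F} := by
  have key : {ω | K ω ⊆ F}ᶜ = ⋃ (k : ℕ) (q : ℚ),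
      {ω | (0 < q ∧ closedBall (u k) (q : ℝ) ⊆ Fᶜ) ∧ infDist (u k) (K ω) < (q : ℝ)} := by
    ext ω
    simp only [mem_compl_iff, mem_setOf_eq, mem_iUnion]
    constructor
    · intro h
      obtain ⟨x, hxK, hxF⟩ := not_subset.mp h
      obtain ⟨r, hr, hball⟩ := Metric.isOpen_iff.mp hF.isOpen_compl x hxF
      obtain ⟨k, hk⟩ := hu.exists_dist_lt x (by positivity : (0:ℝ) < r/4)
      have hdd : dist (u k) x < r/2 := by rw [dist_comm]; linarith
      obtain ⟨q, hq1, hq2⟩ := exists_rat_btwn hdd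
      refine ⟨k, q, ⟨?_, ?_⟩, ?_⟩
      · exact_mod_cast lt_of_le_of_lt dist_nonneg hq1
      · intro y hy
        apply hball
        have h1 : dist y (u k) ≤ (q:ℝ) := mem_closedBall.mp hy
        have h2 : dist y x ≤ dist y (u k) + dist (u k) x := dist_triangle _ _ _
        have hk' : dist (u k) x < r/2 := hdd
        rw [Metric.mem_ball]
        linarith
      · exact lt_of_le_of_lt (Metric.infDist_le_dist_of_mem hxK) hq1
    · rintro ⟨k, q, ⟨hq, hsub⟩, hlt⟩
      obtain ⟨y, hyK, hy⟩ := (Metric.infDist_lt_iff (hK.2.1 ω)).mp hlt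
      intro hsubF
      exact hsub (mem_closedBall'.mpr hy.le) (hsubF hyK)
  have h2 : MeasurableSet ({ω | K ω ⊆ F}ᶜ) := by
    rw [key]
    refine MeasurableSet.iUnion fun k => MeasurableSet.iUnion fun q => ?_
    by_cases h : 0 < q ∧ closedBall (u k) (q : ℝ) ⊆ Fᶜ
    · simp only [h, true_and]
      exact measurableSet_lt (hK.2.2 (u k)) measurable_const
    · simp only [h, false_and, setOf_false, MeasurableSet.empty]
  simpa using h2.compl


lemma exists_compact_tight [CompleteSpace E] [SecondCountableTopology E]
    [IsProbabilityMeasure P] {K : Ω → Set E}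
    (hK : IsCompactRandomSet K) {η : ℝ} (hη : 0 < η) (hΩ : Nonempty Ω) :
    ∃ C : Set E, IsCompact C ∧ MeasurableSet {ω | K ω ⊆ C} ∧
      P ({ω | K ω ⊆ C}ᶜ) ≤ ENNReal.ofReal η := by
  have hE : Nonempty E := ⟨(hK.2.1 (Classical.arbitrary Ω)).choose⟩
  obtain ⟨u, hu⟩ := TopologicalSpace.exists_dense_seq E
  set F : ℕ → ℕ → Set E := fun n m => ⋃ k ∈ Finset.range (m+1),
    closedBall (u k) ((n+1:ℝ)⁻¹) with hF
  have hFclosed : ∀ n m, IsClosed (F n m) := fun n m =>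
    isClosed_biUnion_finset fun k _ => isClosed_closedBall
  have hAmeas : ∀ n m, MeasurableSet {ω | K ω ⊆ F n m} := fun n m =>
    measurableSet_subset_closed hK u hu (hFclosed n m)
  -- monotone and covering
  have hmono : ∀ n, Monotone fun m => {ω | K ω ⊆ F n m} := by
    intro n m m' hmm ω hω
    refine hω.trans (iUnion₂_subset fun k hk => ?_)
    exact subset_iUnion₂ (s := fun k _ => closedBall (u k) ((n+1:ℝ)⁻¹)) k
      (Finset.mem_range.mpr (lt_of_lt_of_le (Finset.mem_range.mp hk) (by omega)))
  have hcover : ∀ n, ⋃ m, {ω | K ω ⊆ F n m} = univ := by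
    intro n
    rw [eq_univ_iff_forall]
    intro ω
    have hsub : K ω ⊆ ⋃ k : ℕ, ball (u k) ((n+1:ℝ)⁻¹) := by
      intro x _
      obtain ⟨k, hk⟩ := hu.exists_dist_lt x (by positivity : (0:ℝ) < (n+1:ℝ)⁻¹)
      exact mem_iUnion.mpr ⟨k, by rwa [Metric.mem_ball]⟩
    obtain ⟨s, hs⟩ := (hK.1 ω).elim_finite_subcover _ (fun k => isOpen_ball) hsub
    refine mem_iUnion.mpr ⟨s.sup id, ?_⟩
    intro x hx
    obtain ⟨k, hks, hxk⟩ := mem_iUnion₂.mp (hs hx)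
    refine mem_iUnion₂.mpr ⟨k, Finset.mem_range.mpr ?_, ball_subset_closedBall hxk⟩
    exact lt_of_le_of_lt (Finset.le_sup (f := id) hks) (Nat.lt_succ_self _)
  -- choose m n
  have hchoice : ∀ n : ℕ, ∃ m, 1 - ENNReal.ofReal η * 2⁻¹^(n+1) < P {ω | K ω ⊆ F n m} := by
    intro n
    have htend : Tendsto (fun m => P {ω | K ω ⊆ F n m}) atTop (𝓝 (P (⋃ m, {ω | K ω ⊆ F n m}))) :=
      tendsto_measure_iUnion_atTop (hmono n)
    rw [hcover n, measure_univ] at htend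
    have hlt : 1 - ENNReal.ofReal η * 2⁻¹^(n+1) < 1 := by
      refine ENNReal.sub_lt_self ENNReal.one_ne_top one_ne_zero ?_
      exact mul_ne_zero (ENNReal.ofReal_pos.mpr hη).ne' (pow_ne_zero _ (ENNReal.inv_ne_zero.mpr ENNReal.ofNat_ne_top))
    exact (htend.eventually_const_lt hlt).exists
  choose m hm using hchoice
  set C : Set E := ⋂ n, F n (m n) with hC
  have hsubC : {ω | K ω ⊆ C} = ⋂ n, {ω | K ω ⊆ F n (m n)} := by
    ext ω; simp only [mem_setOf_eq, mem_iInter, hC, subset_iInter_iff]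
  refine ⟨C, ?_, ?_, ?_⟩
  · -- compact
    refine TotallyBounded.isCompact_of_isClosed ?_ (isClosed_iInter fun n => hFclosed n (m n))
    rw [Metric.totallyBounded_iff]
    intro r hr
    obtain ⟨n, hn⟩ := exists_nat_gt r⁻¹
    refine ⟨u '' {k | k < m n + 1}, (Set.finite_Iio (m n + 1)).image u, ?_⟩
    intro x hx
    have hx' : x ∈ F n (m n) := mem_iInter.mp hx n
    obtain ⟨k, hk, hxk⟩ := mem_iUnion₂.mp hx'
    have hnr : (n+1:ℝ)⁻¹ < r := by
      rw [inv_lt_comm₀ (by positivity) hr]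
      calc r⁻¹ < n := hn
        _ < n + 1 := by linarith
    refine mem_iUnion₂.mpr ⟨u k, mem_image_of_mem u (Finset.mem_range.mp hk), ?_⟩
    rw [Metric.mem_ball]
    exact lt_of_le_of_lt (mem_closedBall.mp hxk) hnr
  · rw [hsubC]; exact MeasurableSet.iInter fun n => hAmeas n (m n)
  · rw [hsubC, compl_iInter]
    refine le_trans (measure_iUnion_le _) ?_
    have hterm : ∀ n, P ({ω | K ω ⊆ F n (m n)}ᶜ) ≤ ENNReal.ofReal η * 2⁻¹^(n+1) := by
      intro n
      rw [prob_compl_eq_one_sub (hAmeas n (m n))]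
      rw [tsub_le_iff_right]
      calc (1:ENNReal) ≤ 1 - ENNReal.ofReal η * 2⁻¹^(n+1) + ENNReal.ofReal η * 2⁻¹^(n+1) :=
        le_tsub_add
        _ ≤ P {ω | K ω ⊆ F n (m n)} + ENNReal.ofReal η * 2⁻¹^(n+1) := add_le_add_left (hm n).le _
        _ = _ := add_comm _ _
    refine le_trans (ENNReal.tsum_le_tsum hterm) ?_
    rw [ENNReal.tsum_mul_left]
    have : ∑' n : ℕ, (2⁻¹:ENNReal)^(n+1) = 1 := by
      simp only [pow_succ]
      rw [ENNReal.tsum_mul_right, ENNReal.tsum_geometric, ENNReal.one_sub_inv_two, inv_inv]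
      rw [mul_comm]
      exact ENNReal.inv_mul_cancel two_ne_zero ENNReal.ofNat_ne_top
    rw [this, mul_one]


/-- If there is a compact random set `K` weakly attracting every bounded subset of `E`, then
for every `ε > 0` there is a compact `Cε` such that for each `δ > 0` and each bounded `B ⊆ E`
there is `t₀ > 0` with `P{φ(t,ω)(B) ⊆ Cε^δ} ≥ 1 - ε` for all `t ≥ t₀`. -/
theorem weakB_attractor_necessary_condition
    [CompleteSpace E] [SecondCountableTopology E] [BorelSpace E] [IsProbabilityMeasure P]
    (ψ : ContinuousRDS E Ω P) (K : Ω → Set E) (hK : IsCompactRandomSet K)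
    (hattr : ∀ B : Set E, Bornology.IsBounded B → WeaklyAttracts ψ K B) :
    ∀ ε : ℝ, 0 < ε → ∃ Cε : Set E, IsCompact Cε ∧
      ∀ δ : ℝ, 0 < δ → ∀ B : Set E, Bornology.IsBounded B →
        ∃ t₀ : ℝ, 0 < t₀ ∧ ∀ t : ℝ, t₀ ≤ t →
          ENNReal.ofReal (1 - ε) ≤
            P {ω | (fun x => ψ.φ t x ω) '' B ⊆ cthickening δ Cε} := by
  
  intro ε hε
  by_cases hε1 : 1 ≤ ε
  · exact ⟨∅, isCompact_empty, fun δ hδ B hB => ⟨1, one_pos, fun t ht => by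
      simp [ENNReal.ofReal_eq_zero.mpr (by linarith : 1 - ε ≤ 0)]⟩⟩
  push_neg at hε1
  have hΩ : Nonempty Ω := by
    by_contra h
    rw [not_nonempty_iff] at h
    have h1 : P univ = 1 := measure_univ
    rw [univ_eq_empty_iff.mpr h, measure_empty] at h1
    exact zero_ne_one h1
  obtain ⟨C, hCcomp, hGmeas, hGP⟩ := exists_compact_tight (P := P) hK (half_pos hε) hΩ
  refine ⟨C, hCcomp, fun δ hδ B hB => ?_⟩
  have hattrB := hattr B hB (ENNReal.ofReal δ) (ENNReal.ofReal_pos.mpr hδ)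
  have hev : ∀ᶠ t in atTop,
      P {ω | ENNReal.ofReal δ < semiDist ((fun x => ψ.φ t x (ψ.θ (-t) ω)) '' B) (K ω)}
        < ENNReal.ofReal (ε/2) :=
    hattrB.eventually_lt_const (ENNReal.ofReal_pos.mpr (half_pos hε))
  obtain ⟨T, hT⟩ := eventually_atTop.mp hev
  refine ⟨max T 1, lt_of_lt_of_le one_pos (le_max_right _ _), fun t ht => ?_⟩
  have htT : T ≤ t := le_trans (le_max_left _ _) ht
  set S := {ω | ENNReal.ofReal δ < semiDist ((fun x => ψ.φ t x (ψ.θ (-t) ω)) '' B) (K ω)} with hS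
  set G := {ω | K ω ⊆ C} with hG
  have hid : ∀ ω, ψ.θ (-t) (ψ.θ t ω) = ω := by
    intro ω
    have h1 : ψ.θ (-t + t) = ψ.θ (-t) ∘ ψ.θ t := ψ.theta_add (-t) t
    rw [neg_add_cancel, ψ.theta_zero] at h1
    exact (congrFun h1 ω).symm
  have hincl : ψ.θ t ⁻¹' (G ∩ Sᶜ) ⊆
      {ω | (fun x => ψ.φ t x ω) '' B ⊆ cthickening δ C} := by
    rintro ω ⟨hGω, hSω⟩
    intro y hy
    rw [Metric.mem_cthickening_iff]
    simp only [hS, hG, mem_compl_iff, mem_setOf_eq, not_lt, hid ω] at hGω hSω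
    calc EMetric.infEdist y C ≤ EMetric.infEdist y (K (ψ.θ t ω)) := EMetric.infEdist_anti hGω
      _ ≤ semiDist ((fun x => ψ.φ t x ω) '' B) (K (ψ.θ t ω)) :=
        le_iSup₂ (f := fun b (_ : b ∈ (fun x => ψ.φ t x ω) '' B) =>
          EMetric.infEdist b (K (ψ.θ t ω))) y hy
      _ ≤ ENNReal.ofReal δ := hSω
  have h1 : P G ≤ P (ψ.θ t ⁻¹' (G ∩ Sᶜ)) + P (ψ.θ t ⁻¹' S) := by
    have hpre : ψ.θ t ⁻¹' G ⊆ ψ.θ t ⁻¹' (G ∩ Sᶜ) ∪ ψ.θ t ⁻¹' S := by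
      rw [← preimage_union]
      refine preimage_mono ?_
      intro ω hω
      by_cases hωS : ω ∈ S
      · exact Or.inr hωS
      · exact Or.inl ⟨hω, hωS⟩
    calc P G = P (ψ.θ t ⁻¹' G) := ((ψ.measurePreserving_theta t).measure_preimage hGmeas.nullMeasurableSet).symm
      _ ≤ P (ψ.θ t ⁻¹' (G ∩ Sᶜ) ∪ ψ.θ t ⁻¹' S) := measure_mono hpre
      _ ≤ _ := measure_union_le _ _
  have h2 : P (ψ.θ t ⁻¹' S) ≤ ENNReal.ofReal (ε/2) := by
    calc P (ψ.θ t ⁻¹' S) ≤ (P.map (ψ.θ t)) S :=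
      Measure.le_map_apply (ψ.measurePreserving_theta t).measurable.aemeasurable S
      _ = P S := by rw [(ψ.measurePreserving_theta t).map_eq]
      _ ≤ _ := (hT t htT).le
  have h3 : (1:ENNReal) ≤ P G + ENNReal.ofReal (ε/2) := by
    calc (1:ENNReal) = P G + P Gᶜ := (prob_add_prob_compl hGmeas).symm
      _ ≤ _ := add_le_add_right hGP _
  have h4 : (1:ENNReal) ≤
      P {ω | (fun x => ψ.φ t x ω) '' B ⊆ cthickening δ C} + ENNReal.ofReal ε := by
    have hhalf : ENNReal.ofReal (ε/2) + ENNReal.ofReal (ε/2) = ENNReal.ofReal ε := by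
      rw [← ENNReal.ofReal_add (by linarith) (by linarith)]
      norm_num
    calc (1:ENNReal) ≤ P G + ENNReal.ofReal (ε/2) := h3
      _ ≤ (P (ψ.θ t ⁻¹' (G ∩ Sᶜ)) + P (ψ.θ t ⁻¹' S)) + ENNReal.ofReal (ε/2) :=
        add_le_add_left h1 _
      _ ≤ (P {ω | (fun x => ψ.φ t x ω) '' B ⊆ cthickening δ C} + ENNReal.ofReal (ε/2))
          + ENNReal.ofReal (ε/2) :=
        add_le_add_left (add_le_add (measure_mono hincl) h2) _
      _ = _ := by rw [add_assoc, hhalf]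
  have h5 : ENNReal.ofReal (1-ε) + ENNReal.ofReal ε = 1 := by
    rw [← ENNReal.ofReal_add (by linarith) hε.le]
    norm_num
  exact ENNReal.le_of_add_le_add_right ENNReal.ofReal_ne_top (by rw [h5]; exact h4)
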